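/- Let C = [0,1]² be the unit square in the plane. For every nonempty finite family F of positive homothets of C (i.e., axis-parallel squares of arbitrary positive side lengths), τ(F) ≤ 4 · ν(F) − 3. -/

import Mathlib

open Pointwise

lemma mem_square {C : Set (EuclideanSpace ℝ (Fin 2))}
    (hC : C = {x : EuclideanSpace ℝ (Fin 2) | ∀ i, x i ∈ Set.Icc (0 : ℝ) 1})
    {r : ℝ} (hr : 0 < r) (v x : EuclideanSpace ℝ (Fin 2)) :
    x ∈ v +ᵥ r • C ↔ ∀ i, v i ≤ x i ∧ x i ≤ v i + r := by
  subst hC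
  constructor
  · rintro ⟨y, ⟨z, hz, rfl⟩, rfl⟩
    intro i
    have h := hz i
    simp only [Set.mem_Icc] at h
    have e : (fun x => v +ᵥ x) ((fun x => r • x) z) i = v i + r * z i := rfl
    rw [e]
    constructor <;> nlinarith [h.1, h.2]
  · intro h
    refine ⟨r • (WithLp.toLp 2 (fun i => (x i - v i) / r) : EuclideanSpace ℝ (Fin 2)), ⟨_, ?_, rfl⟩, ?_⟩
    · intro i
      have := h i
      simp only [Set.mem_Icc]
      constructor
      · exact div_nonneg (by linarith [this.1]) hr.le
      · rw [div_le_one hr]; linarith [this.2]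
    · ext i
      show v i + r * ((x i - v i) / r) = x i
      field_simp
      ring

lemma corner_coord {a b r s : ℝ} (hrs : r ≤ s) {x : ℝ}
    (hx1 : a ≤ x) (hx2 : x ≤ a + r) (hx3 : b ≤ x) (hx4 : x ≤ b + s) :
    ∃ c : Bool, b ≤ a + (if c then r else 0) ∧ a + (if c then r else 0) ≤ b + s := by
  by_cases hab : b ≤ a
  · exact ⟨false, by simpa using hab, by simp; linarith⟩
  · exact ⟨true, by simp; linarith, by simp; linarith⟩

theorem piercing_aux
    (C : Set (EuclideanSpace ℝ (Fin 2)))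
    (hC : C = {x : EuclideanSpace ℝ (Fin 2) | ∀ i, x i ∈ Set.Icc (0 : ℝ) 1}) :
    ∀ n : ℕ, ∀ S : Finset (ℝ × EuclideanSpace ℝ (Fin 2)), S.card ≤ n →
    (∀ s ∈ S, 0 < s.1) → S.Nonempty →
    ∃ (P : Finset (EuclideanSpace ℝ (Fin 2))) (W : Finset (ℝ × EuclideanSpace ℝ (Fin 2))),
      W ⊆ S ∧
      (∀ s ∈ S, ∃ x ∈ P, x ∈ s.2 +ᵥ s.1 • C) ∧
      ((W : Set (ℝ × EuclideanSpace ℝ (Fin 2))).Pairwise fun s s' =>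
        Disjoint (s.2 +ᵥ s.1 • C) (s'.2 +ᵥ s'.1 • C)) ∧
      P.card + 3 ≤ 4 * W.card := by
  intro n
  induction n with
  | zero =>
    intro S hcard _ hne
    exact absurd (Finset.card_pos.mpr hne) (by omega)
  | succ n ih =>
    intro S hcard hS hSne
    classical
    -- every square contains its own base point
    have hself : ∀ s ∈ S, (s.2 : EuclideanSpace ℝ (Fin 2)) ∈ s.2 +ᵥ s.1 • C := by
      intro s hs
      rw [mem_square hC (hS s hs)]
      intro i
      exact ⟨le_refl _, by linarith [hS s hs]⟩
    by_cases hcommon : ∃ p, ∀ s ∈ S, p ∈ s.2 +ᵥ s.1 • C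
    · obtain ⟨p, hp⟩ := hcommon
      obtain ⟨s₀, hs₀⟩ := hSne
      exact ⟨{p}, {s₀}, by simp [hs₀], fun s hs => ⟨p, by simp, hp s hs⟩,
        by rw [Finset.coe_singleton]; exact Set.pairwise_singleton _ _, by simp⟩
    · obtain ⟨q, hqS, hqmin⟩ := S.exists_min_image (fun s => s.1) hSne
      have hq1 : 0 < q.1 := hS q hqS
      set corner : (Fin 2 → Bool) → EuclideanSpace ℝ (Fin 2) :=
        fun c => (WithLp.toLp 2 (fun i => q.2 i + if c i then q.1 else 0) : EuclideanSpace ℝ (Fin 2)) with hcorner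
      set P₀ : Finset (EuclideanSpace ℝ (Fin 2)) := Finset.image corner Finset.univ with hP₀
      have hP₀card : P₀.card ≤ 4 := le_trans Finset.card_image_le (by simp)
      have hkey : ∀ s ∈ S, ¬ Disjoint (s.2 +ᵥ s.1 • C) (q.2 +ᵥ q.1 • C) →
          ∃ x ∈ P₀, x ∈ s.2 +ᵥ s.1 • C := by
        intro s hs hnd
        rw [Set.not_disjoint_iff] at hnd
        obtain ⟨x, hxs, hxq⟩ := hnd
        rw [mem_square hC (hS s hs)] at hxs
        rw [mem_square hC hq1] at hxq
        choose c hc using fun i =>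
          corner_coord (hqmin s hs) (hxq i).1 (hxq i).2 (hxs i).1 (hxs i).2
        refine ⟨corner c, Finset.mem_image_of_mem _ (Finset.mem_univ c), ?_⟩
        rw [mem_square hC (hS s hs)]
        intro i
        exact hc i
      set S' : Finset (ℝ × EuclideanSpace ℝ (Fin 2)) :=
        S.filter (fun s => Disjoint (s.2 +ᵥ s.1 • C) (q.2 +ᵥ q.1 • C)) with hS'
      have hqnotS' : q ∉ S' := by
        intro hq
        rw [hS', Finset.mem_filter] at hq
        exact Set.disjoint_left.mp hq.2 (hself q hqS) (hself q hqS)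
      by_cases hS'ne : S'.Nonempty
      · -- recursive case
        have hsub : S' ⊆ S := Finset.filter_subset _ _
        have hlt : S'.card < S.card := Finset.card_lt_card ⟨hsub, fun h => hqnotS' (h hqS)⟩
        obtain ⟨P', W', hW'sub, hP'pierce, hW'pair, hcard'⟩ :=
          ih S' (by omega) (fun s hs => hS s (hsub hs)) hS'ne
        refine ⟨P₀ ∪ P', insert q W', ?_, ?_, ?_, ?_⟩
        · exact Finset.insert_subset hqS (hW'sub.trans hsub)
        · intro s hs
          by_cases hd : Disjoint (s.2 +ᵥ s.1 • C) (q.2 +ᵥ q.1 • C)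
          · obtain ⟨x, hxP, hx⟩ := hP'pierce s (by rw [hS', Finset.mem_filter]; exact ⟨hs, hd⟩)
            exact ⟨x, Finset.mem_union_right _ hxP, hx⟩
          · obtain ⟨x, hxP, hx⟩ := hkey s hs hd
            exact ⟨x, Finset.mem_union_left _ hxP, hx⟩
        · rw [Finset.coe_insert]
          refine (@Set.pairwise_insert_of_symm _ _ _ _ ⟨fun a b h => h.symm⟩) |>.mpr ⟨hW'pair, ?_⟩
          intro b hb _
          have hbS' : b ∈ S' := hW'sub hb
          rw [hS', Finset.mem_filter] at hbS'
          exact hbS'.2.symm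
        · have h1 : (P₀ ∪ P').card ≤ P₀.card + P'.card := Finset.card_union_le _ _
          have h2 : (insert q W').card = W'.card + 1 := by
            rw [Finset.card_insert_of_notMem (fun h => hqnotS' (hW'sub h))]
          omega
      · -- S' empty : every square meets q's square, pierced by P₀; need ν ≥ 2
        have hmeets : ∀ s ∈ S, ¬ Disjoint (s.2 +ᵥ s.1 • C) (q.2 +ᵥ q.1 • C) := by
          intro s hs hd
          exact hS'ne ⟨s, by rw [hS', Finset.mem_filter]; exact ⟨hs, hd⟩⟩
        -- find two disjoint squares using the box-Helly argument
        have hdisj : ∃ s ∈ S, ∃ t ∈ S, Disjoint (s.2 +ᵥ s.1 • C) (t.2 +ᵥ t.1 • C) := by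
          by_contra hcon
          push_neg at hcon
          apply hcommon
          refine ⟨(WithLp.toLp 2 (fun i => S.sup' hSne (fun s => s.2 i)) : EuclideanSpace ℝ (Fin 2)), ?_⟩
          intro t ht
          rw [mem_square hC (hS t ht)]
          intro i
          constructor
          · exact Finset.le_sup' (fun s => s.2 i) ht
          · apply Finset.sup'_le hSne
            intro s hs
            have := hcon s hs t ht
            rw [Set.not_disjoint_iff] at this
            obtain ⟨x, hxs, hxt⟩ := this
            rw [mem_square hC (hS s hs)] at hxs
            rw [mem_square hC (hS t ht)] at hxt
            linarith [(hxs i).1, (hxt i).2]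
        obtain ⟨s, hs, t, ht, hst⟩ := hdisj
        have hne : s ≠ t := by
          rintro rfl
          exact Set.disjoint_left.mp hst (hself s hs) (hself s hs)
        refine ⟨P₀, {s, t}, ?_, ?_, ?_, ?_⟩
        · intro a ha
          simp only [Finset.mem_insert, Finset.mem_singleton] at ha
          rcases ha with rfl | rfl
          · exact hs
          · exact ht
        · intro a ha
          exact hkey a ha (hmeets a ha)
        · rw [Finset.coe_insert, Finset.coe_singleton]
          exact (@Set.pairwise_pair_of_symm _ _ _ _ ⟨fun a b h => h.symm⟩) |>.mpr (fun _ => hst)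
        · rw [Finset.card_insert_of_notMem (by simpa using hne), Finset.card_singleton]
          omega

theorem piercing_homothets_unit_square
    (C : Set (EuclideanSpace ℝ (Fin 2)))
    (hC : C = {x : EuclideanSpace ℝ (Fin 2) | ∀ i, x i ∈ Set.Icc (0 : ℝ) 1})
    (S : Finset (ℝ × EuclideanSpace ℝ (Fin 2)))
    (hS : ∀ s ∈ S, 0 < s.1) (hSne : S.Nonempty) :
    ∃ (P : Finset (EuclideanSpace ℝ (Fin 2))) (W : Finset (ℝ × EuclideanSpace ℝ (Fin 2))),
      W ⊆ S ∧
      (∀ s ∈ S, ∃ x ∈ P, x ∈ s.2 +ᵥ s.1 • C) ∧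
      ((W : Set (ℝ × EuclideanSpace ℝ (Fin 2))).Pairwise fun s s' =>
        Disjoint (s.2 +ᵥ s.1 • C) (s'.2 +ᵥ s'.1 • C)) ∧
      P.card + 3 ≤ 4 * W.card := by
  exact piercing_aux C hC S.card S le_rfl hS hSne
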